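/- Let k, l ≥ 3 be integers, n = k + l, let λ_1 ≠ λ_2 be points of D, let ε > 0 be small enough that the map φ : D → ℂ^n, φ(ζ) := π(diag(B_k^{λ_1}(εζ), B_l^{λ_2}(εζ))), takes its values in G_n. Let A := diag(B_k^{λ_1}(0), B_l^{λ_2}(0)) and let A′ be its modified Jordan form. Then there do not exist holomorphic functions f_2, …, f_n and φ_{1,1} on D such that: none of the f_i is identically zero; f_i(0) = A′_{i−1,i} for 2 ≤ i ≤ n; φ_{1,1}(0) = A′_{1,1} = λ_1; and the function ζ ↦ −P_{[φ(ζ)]}(φ_{1,1}(ζ))/(f_2(ζ)⋯f_n(ζ)) extends holomorphically across its singularities with value 0 at ζ = 0. (In particular, for n ≥ 6 the lifting formula of the paper's Proposition 4.4, which requires exactly these conditions at a prescribed point, cannot in general interpolate a prescribed derogatory matrix.) -/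

import Mathlib

open Polynomial

noncomputable section

/-- The open unit disc in `ℂ`. -/
def unitDisc : Set ℂ := Metric.ball 0 1

/-- `g(ζ) = O((ζ-α)^d)` at `α`: for a function holomorphic near `α`, vanishing
to order at least `d`, i.e. all derivatives of order `< d` vanish at `α`. -/
def VanishesToOrder (g : ℂ → ℂ) (α : ℂ) (d : ℕ) : Prop :=
  ∀ i < d, iteratedDeriv i g α = 0

/-- The map `π : M_n(ℂ) → ℂ^n`, `π(A) = (σ_1(A), …, σ_n(A))`, where
`det(tI - A) = ∑_{j=0}^n (-1)^j σ_j(A) t^{n-j}`.  Index `i : Fin n` stands for `j = i+1`. -/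
def piCoef (n : ℕ) (A : Matrix (Fin n) (Fin n) ℂ) : Fin n → ℂ :=
  fun i => (-1 : ℂ) ^ ((i : ℕ) + 1) * (Matrix.charpoly A).coeff (n - ((i : ℕ) + 1))

/-- The spectral ball `Ω_n`: matrices whose eigenvalues (roots of the characteristic
polynomial) all have modulus `< 1`. -/
def SpectralBall (n : ℕ) : Set (Matrix (Fin n) (Fin n) ℂ) :=
  { A | ∀ z ∈ (Matrix.charpoly A).roots, ‖z‖ < 1 }

/-- The symmetrized polydisc `G_n = π(Ω_n)`. -/
def SymPolydisc (n : ℕ) : Set (Fin n → ℂ) := piCoef n '' SpectralBall n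

/-- `P_{[v]}(t) = t^n + ∑_{j=1}^n (-1)^j v_j t^{n-j}`. -/
def Pv (n : ℕ) (v : Fin n → ℂ) : Polynomial ℂ :=
  X ^ n + ∑ i : Fin n, C ((-1 : ℂ) ^ ((i : ℕ) + 1) * v i) * X ^ (n - ((i : ℕ) + 1))

/-- `k`-th derivative of a polynomial with respect to the indeterminate. -/
def polyDeriv (k : ℕ) (P : Polynomial ℂ) : Polynomial ℂ :=
  (fun Q : Polynomial ℂ => Polynomial.derivative Q)^[k] P

/-- A matrix is cyclic (non-derogatory) if some vector has iterates spanning `ℂ^n`. -/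
def IsCyclicMatrix {n : ℕ} (M : Matrix (Fin n) (Fin n) ℂ) : Prop :=
  ∃ v : Fin n → ℂ, Submodule.span ℂ { w : Fin n → ℂ | ∃ k : ℕ, w = (M ^ k).mulVec v } = ⊤

open scoped Classical in
/-- `d_i(B) = 1 + #{ j : m-i+2 ≤ j ≤ m, B_{j-1,j} = 0 }` (1-indexed entries). -/
def dIdx {m : ℕ} (B : Matrix (Fin m) (Fin m) ℂ) (i : ℕ) : ℕ :=
  1 + ((Finset.Icc (m - i + 2) m).filter
      (fun j => ∀ (h1 : j - 2 < m) (h2 : j - 1 < m), B ⟨j - 2, h1⟩ ⟨j - 1, h2⟩ = 0)).card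

open scoped Classical in
/-- A single-eigenvalue Jordan matrix with eigenvalue `lam`: diagonal entries `lam`,
superdiagonal entries `0` or `1`, all other entries `0`, and the sizes of the consecutive
Jordan blocks (delimited by the vanishing superdiagonal entries) nondecreasing.
The list `L` records the consecutive Jordan block sizes; the superdiagonal entry in
(0-indexed) column `j` vanishes exactly when `j` is a proper partial sum of `L`. -/
def IsSingleJordan {m : ℕ} (B : Matrix (Fin m) (Fin m) ℂ) (lam : ℂ) : Prop :=
  (∀ i, B i i = lam) ∧
  (∀ i j : Fin m, (j : ℕ) ≠ (i : ℕ) → (j : ℕ) ≠ (i : ℕ) + 1 → B i j = 0) ∧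
  ∃ L : List ℕ, (∀ x ∈ L, 0 < x) ∧ L.sum = m ∧ L.Pairwise (· ≤ ·) ∧
    ∀ i j : Fin m, (j : ℕ) = (i : ℕ) + 1 →
      B i j = if (∃ t, 0 < t ∧ t < L.length ∧ (L.take t).sum = (j : ℕ)) then 0 else 1

/-- Partial sums `n_t = m_1 + ⋯ + m_t` of block sizes. -/
def nsum {s : ℕ} (m : Fin s → ℕ) (t : ℕ) : ℕ :=
  ∑ j ∈ Finset.univ.filter (fun j : Fin s => (j : ℕ) < t), m j

/-- `A = diag(B_1, …, B_s)` is a block Jordan matrix with single-eigenvalue Jordan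
blocks `B j` of size `m j` and pairwise distinct eigenvalues `lam j`. -/
def IsBlockJordan {n s : ℕ} (m : Fin s → ℕ) (lam : Fin s → ℂ)
    (B : ∀ j : Fin s, Matrix (Fin (m j)) (Fin (m j)) ℂ)
    (A : Matrix (Fin n) (Fin n) ℂ) : Prop :=
  (∑ j, m j) = n ∧ Function.Injective lam ∧ (∀ j, 0 < m j) ∧
  (∀ j, IsSingleJordan (B j) (lam j)) ∧
  (∀ (j : Fin s) (a b : Fin (m j)) (h1 : nsum m (j : ℕ) + (a : ℕ) < n)
      (h2 : nsum m (j : ℕ) + (b : ℕ) < n),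
      A ⟨nsum m (j : ℕ) + (a : ℕ), h1⟩ ⟨nsum m (j : ℕ) + (b : ℕ), h2⟩ = B j a b) ∧
  (∀ (i k : Fin n) (j j' : Fin s), j ≠ j' →
      nsum m (j : ℕ) ≤ (i : ℕ) → (i : ℕ) < nsum m ((j : ℕ) + 1) →
      nsum m (j' : ℕ) ≤ (k : ℕ) → (k : ℕ) < nsum m ((j' : ℕ) + 1) →
      A i k = 0)

/-- The conditions (★) at `α` relative to a block Jordan matrix with data `m, lam, B`:
`(d^k P_{[φ(ζ)]}/dt^k)(λ_j) = O((ζ-α)^{d_{m_j-k}(B_j)})` for `1 ≤ j ≤ s`, `0 ≤ k ≤ m_j - 1`. -/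
def StarConditions {n s : ℕ} (m : Fin s → ℕ) (lam : Fin s → ℂ)
    (B : ∀ j : Fin s, Matrix (Fin (m j)) (Fin (m j)) ℂ)
    (φ : ℂ → Fin n → ℂ) (α : ℂ) : Prop :=
  ∀ (j : Fin s), ∀ k < m j,
    VanishesToOrder (fun ζ => (polyDeriv k (Pv n (φ ζ))).eval (lam j)) α
      (dIdx (B j) (m j - k))

/-- Sum of all monomials of degree `d` in `k` variables (complete homogeneous symmetric sum). -/
def homogSum (k d : ℕ) (x : Fin k → ℂ) : ℂ :=
  ∑ c ∈ Finset.Nat.antidiagonalTuple k d, ∏ i, x i ^ c i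

/-- Divided difference `Δ^k P (x_1, …, x_{k+1}) = ∑_{j≥k} a_j ∑_{i_1+⋯+i_{k+1}=j-k} x^i`. -/
def divDiff (P : Polynomial ℂ) (k : ℕ) (x : Fin (k + 1) → ℂ) : ℂ :=
  ∑ j ∈ Finset.Icc k P.natDegree, P.coeff j * homogSum (k + 1) (j - k) x

/-- The Lempert function of the spectral ball. -/
def lempertOmega (n : ℕ) (A B : Matrix (Fin n) (Fin n) ℂ) : ℝ :=
  sInf { r : ℝ | ∃ α ∈ unitDisc, r = ‖α‖ ∧
    ∃ Φ : ℂ → Matrix (Fin n) (Fin n) ℂ,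
      (∀ i j, DifferentiableOn ℂ (fun ζ => Φ ζ i j) unitDisc) ∧
      Set.MapsTo Φ unitDisc (SpectralBall n) ∧ Φ α = A ∧ Φ 0 = B }

/-- The matrix `B_k^λ(ζ)`. -/
def Bmat (k : ℕ) (lam ζ : ℂ) : Matrix (Fin k) (Fin k) ℂ :=
  Matrix.of fun i j =>
    if (j : ℕ) = (i : ℕ) then lam
    else if (j : ℕ) = (i : ℕ) + 1 then (if (i : ℕ) = k - 2 then 1 else ζ)
    else if (i : ℕ) = k - 1 ∧ (j : ℕ) = 0 then ζ
    else 0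

/-- The block diagonal matrix `diag(B_k^{λ_1}(ζ), B_l^{λ_2}(ζ))` as an `(k+l)×(k+l)` matrix. -/
def BmatPair (k l : ℕ) (lam1 lam2 ζ : ℂ) : Matrix (Fin (k + l)) (Fin (k + l)) ℂ :=
  Matrix.reindex finSumFinEquiv finSumFinEquiv
    (Matrix.fromBlocks (Bmat k lam1 ζ) 0 0 (Bmat l lam2 ζ))

end


open Filter Topology

section Aux

open Fin.CommRing Fin.NatCast in
lemma perm_shape {m : ℕ} (σ : Equiv.Perm (Fin (m+3)))
    (h : ∀ i, σ i = i ∨ σ i = i - 1) : σ = 1 ∨ ∀ i, σ i = i - 1 := by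
  have h10 : (1 : Fin (m+3)) ≠ 0 := by
    simp [Fin.ext_iff]
  by_cases hσ : σ = 1
  · exact Or.inl hσ
  right
  obtain ⟨i₀, hi₀⟩ : ∃ i, σ i ≠ i := by
    by_contra hc
    push_neg at hc
    exact hσ (Equiv.ext fun i => hc i)
  have hbase : σ i₀ = i₀ - 1 := (h i₀).resolve_left hi₀
  have hstep : ∀ j, σ j = j - 1 → σ (j - 1) = j - 1 - 1 := by
    intro j hj
    rcases h (j - 1) with h' | h'
    · exfalso
      have : j - 1 = j := σ.injective (h'.trans hj.symm)
      exact h10 (by simpa [sub_eq_self] using this)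
    · exact h'
  have hall : ∀ mm : ℕ, σ (i₀ - mm) = i₀ - mm - 1 := by
    intro mm
    induction mm with
    | zero => simpa using hbase
    | succ p ih =>
        have := hstep _ ih
        have hc : (i₀ : Fin (m+3)) - (p+1 : ℕ) = i₀ - (p : ℕ) - 1 := by
          push_cast
          ring
        rw [hc]
        exact this
  intro i
  have : i = i₀ - ((i₀ - i : Fin (m+3)) : ℕ) := by
    rw [Fin.cast_val_eq_self]
    exact (sub_sub_cancel i₀ i).symm
  rw [this]
  exact hall _

lemma val_add_one' {m : ℕ} (p : Fin (m+3)) :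
    ((p + 1 : Fin (m+3)) : ℕ) = if (p:ℕ) = m + 2 then 0 else (p:ℕ) + 1 := by
  rw [Fin.val_add_one]
  by_cases h : p = Fin.last (m+2)
  · simp [h, Fin.last]
  · rw [if_neg h, if_neg]
    intro hv
    exact h (Fin.ext (by simpa using hv))

lemma Bmat_key0 {m : ℕ} (lam z : ℂ) (p q : Fin (m+3)) (h1 : q ≠ p) (h2 : q ≠ p + 1) :
    Matrix.charmatrix (Bmat (m+3) lam z) p q = 0 := by
  rw [Matrix.charmatrix_apply_ne _ _ _ h1.symm]
  have hvq : (q:ℕ) ≠ (p:ℕ) := fun hv => h1 (Fin.ext hv)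
  have hsup : ¬ ((q:ℕ) = (p:ℕ) + 1) := by
    intro hv
    apply h2
    apply Fin.ext
    rw [val_add_one', if_neg, ← hv]
    intro hp
    have := q.isLt
    omega
  have hcor : ¬ ((p:ℕ) = (m+3) - 1 ∧ (q:ℕ) = 0) := by
    rintro ⟨hp, hq⟩
    apply h2
    apply Fin.ext
    rw [val_add_one', if_pos (by omega), hq]
  simp only [Bmat, Matrix.of_apply, if_neg hvq, if_neg hsup, if_neg hcor, map_zero, neg_zero]

lemma charpoly_Bmat (m : ℕ) (lam z : ℂ) :
    Matrix.charpoly (Bmat (m+3) lam z) = (X - C lam)^(m+3) - C (z^(m+2)) := by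
  set M := Matrix.charmatrix (Bmat (m+3) lam z) with hM
  set c : Equiv.Perm (Fin (m+3)) := (finRotate (m+3))⁻¹ with hcdef
  have hc : ∀ i, c i = i - 1 := by
    intro i
    rw [hcdef]
    rw [Equiv.Perm.inv_def, Equiv.symm_apply_eq, finRotate_succ_apply, sub_add_cancel]
  have h1c : (1 : Equiv.Perm (Fin (m+3))) ≠ c := by
    intro hh
    have := (Equiv.ext_iff.mp hh) 0
    rw [hc 0] at this
    simp only [Equiv.Perm.one_apply] at this
    have := congrArg Fin.val this
    rw [Fin.coe_sub_one] at this
    simp at this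
  have hdet : Matrix.charpoly (Bmat (m+3) lam z) = M.det := rfl
  rw [hdet, Matrix.det_apply]
  rw [← Finset.sum_subset (Finset.subset_univ ({1, c} : Finset (Equiv.Perm (Fin (m+3)))))]
  · rw [Finset.sum_pair h1c]
    have hterm1 : ∀ i, M ((1 : Equiv.Perm (Fin (m+3))) i) i = X - C lam := by
      intro i
      simp only [Equiv.Perm.one_apply, hM]
      rw [Matrix.charmatrix_apply_eq]
      congr 1
      simp [Bmat]
    have htermc : ∀ i : Fin (m+3), M (c i) i = -C (if (i:ℕ) = m + 2 then 1 else z) := by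
      intro i
      rw [hc]
      have hne : i - 1 ≠ i := by
        intro hh
        have : (1 : Fin (m+3)) = 0 := by rwa [sub_eq_self] at hh
        simp [Fin.ext_iff] at this
      rw [hM, Matrix.charmatrix_apply_ne _ _ _ hne]
      congr 1
      have hval : ((i - 1 : Fin (m+3)) : ℕ) = if i = 0 then m + 2 else (i:ℕ) - 1 :=
        Fin.coe_sub_one i
      by_cases h0 : i = 0
      · have hval0 : ((i - 1 : Fin (m+3)) : ℕ) = m + 2 := by rw [hval, if_pos h0]
        have hival : (i : ℕ) = 0 := by rw [h0]; rfl
        simp only [Bmat, Matrix.of_apply, hval0, hival]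
        rw [if_neg (by omega), if_neg (by omega), if_pos ⟨by omega, trivial⟩, if_neg (by omega)]
      · have hipos : 0 < (i:ℕ) := Fin.pos_of_ne_zero h0
        simp only [if_neg h0] at hval
        simp only [Bmat, Matrix.of_apply, hval]
        rw [if_neg (by omega), if_pos (by omega)]
        by_cases hi2 : (i:ℕ) = m + 2
        · rw [if_pos (by omega), if_pos hi2]
        · rw [if_neg (by omega), if_neg hi2]
    rw [Finset.prod_congr rfl (fun i _ => hterm1 i), Finset.prod_congr rfl (fun i _ => htermc i)]
    rw [Finset.prod_const, Finset.card_univ, Fintype.card_fin]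
    have hprodb : ∏ i : Fin (m+3), (-C (if (i:ℕ) = m + 2 then 1 else z)) =
        (-1)^(m+3) * C (z^(m+2)) := by
      have : ∀ i : Fin (m+3), (-C (if (i:ℕ) = m + 2 then 1 else z)) =
          (-1) * C (if (i:ℕ) = m + 2 then 1 else z) := fun i => by ring
      rw [Finset.prod_congr rfl (fun i _ => this i), Finset.prod_mul_distrib,
        Finset.prod_const, Finset.card_univ, Fintype.card_fin, ← map_prod]
      congr 2
      rw [Fin.prod_univ_castSucc]
      have h1 : ∀ i : Fin (m+2), ((Fin.castSucc i : Fin (m+3)) : ℕ) ≠ m + 2 := by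
        intro i
        simp only [Fin.coe_castSucc]
        omega
      rw [Finset.prod_congr rfl (fun i _ => by rw [if_neg (h1 i)]), Finset.prod_const,
        Finset.card_univ, Fintype.card_fin]
      simp [Fin.last]
    rw [hprodb]
    have hsign1 : Equiv.Perm.sign (1 : Equiv.Perm (Fin (m+3))) = 1 := Equiv.Perm.sign_one
    have hsignc : Equiv.Perm.sign c = (-1)^(m+2) := by
      rw [hcdef, Equiv.Perm.sign_inv, sign_finRotate]
      rfl
    rw [hsign1, hsignc, one_smul, Units.smul_def]
    have : (((-1 : ℤˣ)^(m+2) : ℤˣ) : ℤ) = (-1)^(m+2) := by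
      push_cast
      ring
    rw [this, zsmul_eq_mul]
    push_cast
    have hodd : Odd (m + 2 + (m+3)) := ⟨m + 2, by ring⟩
    rw [← mul_assoc, ← pow_add, hodd.neg_one_pow]
    ring
  · intro σ _ hσ
    rcases em (∀ i, σ i = i ∨ σ i = i - 1) with hall | hnall
    · exfalso
      rcases perm_shape σ hall with rfl | hcc
      · exact hσ (by simp)
      · exact hσ (by simp [Finset.mem_insert]; right; exact Equiv.ext fun i => (hcc i).trans (hc i).symm)
    · push_neg at hnall
      obtain ⟨i, hi1, hi2⟩ := hnall
      have hentry : M (σ i) i = 0 := by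
        apply Bmat_key0
        · exact fun hh => hi1 hh.symm
        · intro hh
          apply hi2
          rw [eq_sub_iff_add_eq, ← hh]
      have hzero : (∏ j : Fin (m+3), M (σ j) j) = 0 :=
        Finset.prod_eq_zero (Finset.mem_univ i) hentry
      rw [hzero, smul_zero]

lemma Pv_piCoef (n : ℕ) (hn : 0 < n) (A : Matrix (Fin n) (Fin n) ℂ) :
    Pv n (piCoef n A) = Matrix.charpoly A := by
  have hdeg : (Matrix.charpoly A).natDegree = n := by
    simp [Matrix.charpoly_natDegree_eq_dim]
  have hmon := Matrix.charpoly_monic A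
  have hterm : ∀ i : Fin n, C ((-1:ℂ)^((i:ℕ)+1) * piCoef n A i) * X ^ (n - ((i:ℕ)+1))
      = C ((Matrix.charpoly A).coeff (n - 1 - (i:ℕ))) * X ^ (n - 1 - (i:ℕ)) := by
    intro i
    have he : n - ((i:ℕ)+1) = n - 1 - (i:ℕ) := by omega
    rw [piCoef, he]
    congr 2
    rw [← mul_assoc, ← pow_add]
    rw [Even.neg_one_pow ⟨(i:ℕ)+1, by ring⟩, one_mul]
  rw [Pv, Finset.sum_congr rfl (fun i _ => hterm i)]
  rw [Fin.sum_univ_eq_sum_range (fun j => C ((Matrix.charpoly A).coeff (n - 1 - j)) * X ^ (n - 1 - j)) n]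
  rw [Finset.sum_range_reflect (fun j => C ((Matrix.charpoly A).coeff j) * X ^ j) n]
  conv_rhs => rw [(Matrix.charpoly A).as_sum_range' (n+1) (by omega)]
  rw [Finset.sum_range_succ]
  have hcn : (Matrix.charpoly A).coeff n = 1 := by
    have := hmon.coeff_natDegree
    rwa [hdeg] at this
  rw [hcn]
  simp only [← C_mul_X_pow_eq_monomial]
  rw [map_one, one_mul]
  ring

lemma BmatPair_apply_left (k l : ℕ) (a b z : ℂ) (i j : Fin (k+l)) (hi : (i:ℕ) < k)
    (hj : (j:ℕ) < k) : BmatPair k l a b z i j = Bmat k a z ⟨(i:ℕ), hi⟩ ⟨(j:ℕ), hj⟩ := by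
  rw [BmatPair, Matrix.reindex_apply, Matrix.submatrix_apply]
  have h1 : finSumFinEquiv.symm i = Sum.inl (⟨(i:ℕ), hi⟩ : Fin k) := by
    rw [Equiv.symm_apply_eq, finSumFinEquiv_apply_left]
    apply Fin.ext; rfl
  have h2 : finSumFinEquiv.symm j = Sum.inl (⟨(j:ℕ), hj⟩ : Fin k) := by
    rw [Equiv.symm_apply_eq, finSumFinEquiv_apply_left]
    apply Fin.ext; rfl
  rw [h1, h2]
  rfl

lemma BmatPair_apply_right (k l : ℕ) (a b z : ℂ) (i j : Fin (k+l)) (hi : k ≤ (i:ℕ))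
    (hj : k ≤ (j:ℕ)) : BmatPair k l a b z i j =
      Bmat l b z ⟨(i:ℕ) - k, by have := i.isLt; omega⟩ ⟨(j:ℕ) - k, by have := j.isLt; omega⟩ := by
  rw [BmatPair, Matrix.reindex_apply, Matrix.submatrix_apply]
  have h1 : finSumFinEquiv.symm i = Sum.inr (⟨(i:ℕ) - k, by have := i.isLt; omega⟩ : Fin l) := by
    rw [Equiv.symm_apply_eq, finSumFinEquiv_apply_right]
    apply Fin.ext; simp [Fin.natAdd]; omega
  have h2 : finSumFinEquiv.symm j = Sum.inr (⟨(j:ℕ) - k, by have := j.isLt; omega⟩ : Fin l) := by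
    rw [Equiv.symm_apply_eq, finSumFinEquiv_apply_right]
    apply Fin.ext; simp [Fin.natAdd]; omega
  rw [h1, h2]
  rfl

lemma charpoly_BmatPair (k l : ℕ) (lam1 lam2 z : ℂ) :
    Matrix.charpoly (BmatPair k l lam1 lam2 z) =
      Matrix.charpoly (Bmat k lam1 z) * Matrix.charpoly (Bmat l lam2 z) := by
  rw [BmatPair, Matrix.charpoly_reindex, Matrix.charpoly_fromBlocks_zero₂₁]

lemma Bmat_superdiag_zero (K : ℕ) (lam : ℂ) (a b : Fin K) (hab : (b:ℕ) = (a:ℕ)+1)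
    (hne : (a:ℕ) ≠ K - 2) : Bmat K lam 0 a b = 0 := by
  simp only [Bmat, Matrix.of_apply]
  rw [if_neg (by omega), if_pos hab, if_neg hne]

lemma vanish_factor {f : ℂ → ℂ} (hf : AnalyticAt ℂ f 0) (h0 : f 0 = 0) :
    ∃ w : ℂ → ℂ, AnalyticAt ℂ w 0 ∧ ∀ᶠ z in 𝓝 (0:ℂ), f z = z * w z := by
  by_cases hev : ∀ᶠ z in 𝓝 (0:ℂ), f z = 0
  · exact ⟨fun _ => 0, analyticAt_const, by filter_upwards [hev] with z hz; simp [hz]⟩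
  · obtain ⟨nn, gg, hgan, hg0, hfe⟩ := hf.exists_eventuallyEq_pow_smul_nonzero_iff.mpr hev
    have hn : nn ≠ 0 := by
      rintro rfl
      apply hg0
      have := hfe.self_of_nhds
      simpa [h0] using this.symm
    refine ⟨fun z => z^(nn-1) * gg z, ((analyticAt_id.pow _).mul hgan), ?_⟩
    filter_upwards [hfe] with z hz
    rw [hz]
    simp only [smul_eq_mul, sub_zero]
    have hp : z^nn = z^(nn-1) * z := by
      conv_lhs => rw [show nn = (nn - 1) + 1 by omega]
      rw [pow_succ]
    rw [hp]
    ring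

lemma prod_vanish_factor (S : Finset ℕ) (f : ℕ → ℂ → ℂ)
    (hf : ∀ i ∈ S, AnalyticAt ℂ (f i) 0 ∧ f i 0 = 0) :
    ∃ W, AnalyticAt ℂ W 0 ∧ ∀ᶠ z in 𝓝 (0:ℂ), ∏ i ∈ S, f i z = z ^ S.card * W z := by
  induction S using Finset.induction with
  | empty => exact ⟨fun _ => 1, analyticAt_const, by simp⟩
  | @insert a s ha ih =>
    obtain ⟨W, hWan, hWev⟩ := ih (fun i hi => hf i (Finset.mem_insert_of_mem hi))
    obtain ⟨w, hwan, hwev⟩ := vanish_factor (hf a (Finset.mem_insert_self a s)).1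
      (hf a (Finset.mem_insert_self a s)).2
    refine ⟨fun z => w z * W z, hwan.mul hWan, ?_⟩
    filter_upwards [hWev, hwev] with z h1 h2
    rw [Finset.prod_insert ha, h1, h2, Finset.card_insert_of_notMem ha, pow_succ]
    ring

end Aux

/-- counter-example in dimension `n = k + l ≥ 6`: the data required by the
lifting formula of Proposition 4.4 at the derogatory matrix `A'` cannot exist. -/
theorem statement16 (k l : ℕ) (hk : 3 ≤ k) (hl : 3 ≤ l)
    (lam1 lam2 : ℂ) (hlam1 : lam1 ∈ unitDisc) (hlam2 : lam2 ∈ unitDisc) (hne : lam1 ≠ lam2)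
    (ε : ℝ) (hε : 0 < ε)
    (φ : ℂ → Fin (k + l) → ℂ)
    (hφdef : ∀ ζ, φ ζ = piCoef (k + l) (BmatPair k l lam1 lam2 ((ε : ℂ) * ζ)))
    (hφG : Set.MapsTo φ unitDisc (SymPolydisc (k + l)))
    (A' : Matrix (Fin (k + l)) (Fin (k + l)) ℂ)
    (hA' : ∀ i j : Fin (k + l), A' i j =
      if (i : ℕ) = k - 1 ∧ (j : ℕ) = k then 1 else BmatPair k l lam1 lam2 0 i j) :
    ¬ ∃ (f : ℕ → ℂ → ℂ) (φ11 : ℂ → ℂ),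
      (∀ i, 2 ≤ i → i ≤ k + l → DifferentiableOn ℂ (f i) unitDisc) ∧
      (∀ i, 2 ≤ i → i ≤ k + l → ¬ (∀ ζ ∈ unitDisc, f i ζ = 0)) ∧
      (∀ i, 2 ≤ i → i ≤ k + l → ∀ (h1 : i - 2 < k + l) (h2 : i - 1 < k + l),
        f i 0 = A' ⟨i - 2, h1⟩ ⟨i - 1, h2⟩) ∧
      DifferentiableOn ℂ φ11 unitDisc ∧ φ11 0 = lam1 ∧
      ∃ h : ℂ → ℂ, DifferentiableOn ℂ h unitDisc ∧ h 0 = 0 ∧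
        ∀ ζ ∈ unitDisc, (∏ i ∈ Finset.Icc 2 (k + l), f i ζ) ≠ 0 →
          h ζ = -(Pv (k + l) (φ ζ)).eval (φ11 ζ) / ∏ i ∈ Finset.Icc 2 (k + l), f i ζ := by
  obtain ⟨k, rfl⟩ : ∃ k', k = k' + 3 := ⟨k - 3, by omega⟩
  obtain ⟨l, rfl⟩ : ∃ l', l = l' + 3 := ⟨l - 3, by omega⟩
  rintro ⟨f, φ11, hfdiff, hfnz, hf0, hφdiff, hφ0, h, hhdiff, hh0, hkey⟩
  have hUopen : IsOpen unitDisc := Metric.isOpen_ball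
  have hUconn : IsPreconnected unitDisc := (convex_ball (0:ℂ) 1).isPreconnected
  have h0U : (0:ℂ) ∈ unitDisc := Metric.mem_ball_self one_pos
  have hfan : ∀ i, 2 ≤ i → i ≤ k+3+(l+3) → AnalyticAt ℂ (f i) 0 :=
    fun i h2 h3 => ((hfdiff i h2 h3).analyticOnNhd hUopen) 0 h0U
  have hφan : AnalyticAt ℂ φ11 0 := (hφdiff.analyticOnNhd hUopen) 0 h0U
  have hhan : AnalyticAt ℂ h 0 := (hhdiff.analyticOnNhd hUopen) 0 h0U
  -- Explicit formula for the evaluated polynomial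
  have hGP : ∀ z t : ℂ, (Pv (k+3+(l+3)) (φ z)).eval t =
      ((t - lam1)^(k+3) - ((ε:ℂ)*z)^(k+2)) * ((t - lam2)^(l+3) - ((ε:ℂ)*z)^(l+2)) := by
    intro z t
    rw [hφdef z, Pv_piCoef _ (by omega), charpoly_BmatPair, charpoly_Bmat, charpoly_Bmat]
    simp [eval_mul, eval_sub, eval_pow]
  set G : ℂ → ℂ := fun z => -(((φ11 z - lam1)^(k+3) - ((ε:ℂ)*z)^(k+2)) *
      ((φ11 z - lam2)^(l+3) - ((ε:ℂ)*z)^(l+2))) with hGdef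
  -- the singular set
  set S : Finset ℕ := Finset.Icc 2 (k+2) ∪ Finset.Icc (k+5) (k+l+5) with hS
  have hSsub : S ⊆ Finset.Icc 2 (k+3+(l+3)) := by
    intro i hi
    rw [hS, Finset.mem_union, Finset.mem_Icc, Finset.mem_Icc] at hi
    rw [Finset.mem_Icc]
    omega
  have hScard : S.card = k + l + 2 := by
    rw [hS, Finset.card_union_of_disjoint (by
      rw [Finset.disjoint_left]
      intro a ha hb
      rw [Finset.mem_Icc] at ha hb
      omega), Nat.card_Icc, Nat.card_Icc]
    omega
  have hf0S : ∀ i ∈ S, f i 0 = 0 := by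
    intro i hi
    rw [hS, Finset.mem_union, Finset.mem_Icc, Finset.mem_Icc] at hi
    have h2i : 2 ≤ i := by omega
    have hin : i ≤ k+3+(l+3) := by omega
    have h1 : i - 2 < k+3+(l+3) := by omega
    have h2 : i - 1 < k+3+(l+3) := by omega
    rw [hf0 i h2i hin h1 h2, hA']
    rw [if_neg (by simp only [Fin.val_mk]; omega)]
    rcases hi with hi | hi
    · rw [BmatPair_apply_left _ _ _ _ _ _ _ (show ((⟨i-2,h1⟩ : Fin _):ℕ) < k+3 by
          simp only [Fin.val_mk]; omega) (show ((⟨i-1,h2⟩ : Fin _):ℕ) < k+3 by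
          simp only [Fin.val_mk]; omega)]
      apply Bmat_superdiag_zero
      · exact show i - 1 = (i-2) + 1 by omega
      · exact show ¬ (i - 2 = (k+3) - 2) by omega
    · rw [BmatPair_apply_right _ _ _ _ _ _ _ (show k+3 ≤ ((⟨i-2,h1⟩ : Fin _):ℕ) by
          simp only [Fin.val_mk]; omega) (show k+3 ≤ ((⟨i-1,h2⟩ : Fin _):ℕ) by
          simp only [Fin.val_mk]; omega)]
      apply Bmat_superdiag_zero
      · exact show i - 1 - (k+3) = (i-2-(k+3)) + 1 by omega
      · exact show ¬ (i - 2 - (k+3) = (l+3) - 2) by omega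
  -- the f i are eventually nonzero on the punctured neighbourhood
  have hfne' : ∀ i ∈ Finset.Icc 2 (k+3+(l+3)), ∀ᶠ z in 𝓝[≠] (0:ℂ), f i z ≠ 0 := by
    intro i hi
    rw [Finset.mem_Icc] at hi
    have han : AnalyticOnNhd ℂ (f i) unitDisc := (hfdiff i hi.1 hi.2).analyticOnNhd hUopen
    rcases (han 0 h0U).eventually_eq_zero_or_eventually_ne_zero with hev | hev
    · exact absurd (fun ζ hζ =>
        han.eqOn_zero_of_preconnected_of_eventuallyEq_zero hUconn h0U hev hζ)
        (hfnz i hi.1 hi.2)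
    · exact hev
  obtain ⟨wh, hwhan, hwhev⟩ := vanish_factor hhan hh0
  obtain ⟨W, hWan, hWev⟩ := prod_vanish_factor S f
    (fun i hi => by
      have hm := Finset.mem_Icc.mp (hSsub hi)
      exact ⟨hfan i hm.1 hm.2, hf0S i hi⟩)
  obtain ⟨w, hwan, hwev⟩ := vanish_factor (f := fun z => φ11 z - lam1)
    (hφan.sub analyticAt_const) (by simp [hφ0])
  set g : ℂ → ℂ := fun z => -((z * (w z)^(k+3) - (ε:ℂ)^(k+2)) *
      ((φ11 z - lam2)^(l+3) - ((ε:ℂ)*z)^(l+2))) with hgdef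
  have hgan : AnalyticAt ℂ g 0 := by
    apply AnalyticAt.neg
    apply AnalyticAt.mul
    · exact (analyticAt_id.mul (hwan.pow _)).sub analyticAt_const
    · exact ((hφan.sub analyticAt_const).pow _).sub
        ((analyticAt_const.mul analyticAt_id).pow _)
  have hg0 : g 0 ≠ 0 := by
    have hval : g 0 = (ε:ℂ)^(k+2) * (lam1 - lam2)^(l+3) := by
      have hrfl : g 0 = -((0 * (w 0)^(k+3) - (ε:ℂ)^(k+2)) *
          ((φ11 0 - lam2)^(l+3) - ((ε:ℂ)*0)^(l+2))) := rfl
      rw [hrfl, hφ0, mul_zero (ε:ℂ), zero_pow (by omega : l+2 ≠ 0), zero_mul,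
        zero_sub, sub_zero]
      ring
    rw [hval]
    exact mul_ne_zero (pow_ne_zero _ (by exact_mod_cast hε.ne'))
      (pow_ne_zero _ (sub_ne_zero.mpr hne))
  have hA : ∀ᶠ z in 𝓝 (0:ℂ), G z = z^(k+2) * g z := by
    filter_upwards [hwev] with z hz
    have hz' : φ11 z - lam1 = z * w z := hz
    rw [hGdef, hgdef]
    simp only []
    rw [hz']
    ring
  have hmemU : ∀ᶠ z in 𝓝[≠] (0:ℂ), z ∈ unitDisc :=
    (Filter.eventually_of_mem (hUopen.mem_nhds h0U) (fun z hz => hz)).filter_mono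
      nhdsWithin_le_nhds
  have hallne : ∀ᶠ z in 𝓝[≠] (0:ℂ), ∀ i ∈ Finset.Icc 2 (k+3+(l+3)), f i z ≠ 0 :=
    (Filter.eventually_all_finset _).mpr hfne'
  set V : ℂ → ℂ := fun z => wh z * (W z *
      ∏ i ∈ Finset.Icc 2 (k+3+(l+3)) \ S, f i z) with hVdef
  have hB : ∀ᶠ z in 𝓝[≠] (0:ℂ), G z = z^(k+l+3) * V z := by
    filter_upwards [hmemU, hallne, hwhev.filter_mono nhdsWithin_le_nhds,
      hWev.filter_mono nhdsWithin_le_nhds] with z hzU hzne hwh hW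
    have hFne : (∏ i ∈ Finset.Icc 2 (k+3+(l+3)), f i z) ≠ 0 :=
      Finset.prod_ne_zero_iff.mpr hzne
    have hkz := hkey z hzU hFne
    have hGz : G z = h z * ∏ i ∈ Finset.Icc 2 (k+3+(l+3)), f i z := by
      rw [hkz, div_mul_cancel₀ _ hFne, hGP z (φ11 z), hGdef]
    rw [hGz, hwh, ← Finset.prod_sdiff hSsub, hW, hScard, hVdef]
    ring
  have hgV : ∀ᶠ z in 𝓝[≠] (0:ℂ), g z = z^(l+1) * V z := by
    filter_upwards [hA.filter_mono nhdsWithin_le_nhds, hB, self_mem_nhdsWithin]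
      with z h1 h2 hz0
    have hz0' : z ≠ 0 := hz0
    have hcan : z^(k+2) * g z = z^(k+2) * (z^(l+1) * V z) := by
      rw [← h1, h2]
      ring
    exact mul_left_cancel₀ (pow_ne_zero _ hz0') hcan
  have hVct : ContinuousAt V 0 := by
    apply ContinuousAt.mul hwhan.continuousAt
    apply ContinuousAt.mul hWan.continuousAt
    exact (Finset.analyticAt_fun_prod _ (fun i hi => by
      have hm := Finset.mem_Icc.mp (Finset.mem_sdiff.mp hi).1
      exact hfan i hm.1 hm.2)).continuousAt
  have ht2 : Filter.Tendsto (fun z : ℂ => z^(l+1) * V z) (𝓝 0) (𝓝 0) := by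
    have hct : ContinuousAt (fun z : ℂ => z^(l+1) * V z) 0 :=
      ((continuous_pow (l+1)).continuousAt).mul hVct
    have h00 := hct.tendsto
    simpa using h00
  have ht1 : Filter.Tendsto g (𝓝[≠] (0:ℂ)) (𝓝 (g 0)) :=
    (hgan.continuousAt.tendsto).mono_left nhdsWithin_le_nhds
  have hg00 : g 0 = 0 :=
    tendsto_nhds_unique ht1 ((ht2.mono_left nhdsWithin_le_nhds).congr'
      (Filter.EventuallyEq.symm hgV))
  exact hg0 hg00
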